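/- The first-order differential operators 𝒟 and 𝒟† are mutually adjoint with respect to the weight W^{(ν)}_φ: for all N×N complex matrix polynomials P and Q, ∫₀^∞ (x P'(x) + x P(x)(A−1)) · W^{(ν)}_φ(x) · Q(x)^* dx = ∫₀^∞ P(x) · W^{(ν)}_φ(x) · (−x Q'(x) − Q(x)(1+ν+J) + (x φ'(x) − x) Q(x))^* dx. -/

import Mathlib

/-!
Statement 0: The first-order differential operators `𝒟` and `𝒟†` are mutually adjoint with
respect to the Laguerre-type weight `W^{(ν)}_φ(x) = e^{xA} T^{(ν)}_φ(x) e^{xA^*}`: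
for all N×N complex matrix polynomials `P` and `Q`,
`∫₀^∞ (x P'(x) + x P(x)(A−1)) W^{(ν)}_φ(x) Q(x)^* dx
  = ∫₀^∞ P(x) W^{(ν)}_φ(x) (−x Q'(x) − Q(x)(1+ν+J) + (x φ'(x) − x) Q(x))^* dx`.
-/

open MeasureTheory Matrix Polynomial Filter

attribute [local instance] Matrix.normedAddCommGroup Matrix.normedSpace

noncomputable section

abbrev MatC (N : ℕ) := Matrix (Fin N) (Fin N) ℂ
abbrev MatPoly (N : ℕ) := Matrix (Fin N) (Fin N) (Polynomial ℂ)

instance matC_continuousENorm (N : ℕ) : ContinuousENorm (MatC N) :=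
  SeminormedAddGroup.toContinuousENorm

/-- `J = Σ_{k=1}^N k E_{k,k}`. -/
def Jmat (N : ℕ) : MatC N := Matrix.diagonal fun k => ((k : ℕ) + 1 : ℂ)

/-- `A = Σ_{k=1}^{N-1} a_k E_{k+1,k}`. -/
def Amat (N : ℕ) (a : ℕ → ℝ) : MatC N :=
  Matrix.of fun i j => if (i : ℕ) = (j : ℕ) + 1 then ((a ((j : ℕ) + 1) : ℝ) : ℂ) else 0

/-- evaluation of a matrix polynomial at a real point -/
def pEval {N : ℕ} (P : MatPoly N) (x : ℝ) : MatC N := P.map fun q => q.eval (x : ℂ)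

/-- entrywise derivative of a matrix polynomial -/
def pDeriv {N : ℕ} (P : MatPoly N) : MatPoly N := P.map fun q => Polynomial.derivative q

/-- `T^{(ν)}_φ(x) = e^{-φ(x)} Σ_{k=1}^N δ_k x^{ν+k} E_{k,k}`. -/
def Tmat (N : ℕ) (ν : ℝ) (δ : ℕ → ℝ) (φ : ℝ → ℝ) (x : ℝ) : MatC N :=
  Matrix.diagonal fun k =>
    ((Real.exp (-(φ x)) * δ ((k : ℕ) + 1) * x ^ (ν + ((k : ℕ) : ℝ) + 1) : ℝ) : ℂ)

/-- `W^{(ν)}_φ(x) = e^{xA} T^{(ν)}_φ(x) e^{xA^*}`. -/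
def Wmat (N : ℕ) (a : ℕ → ℝ) (ν : ℝ) (δ : ℕ → ℝ) (φ : ℝ → ℝ) (x : ℝ) : MatC N :=
  NormedSpace.exp ((x : ℂ) • Amat N a) * Tmat N ν δ φ x *
    NormedSpace.exp ((x : ℂ) • (Amat N a)ᴴ)

/-! ### Auxiliary material -/

section Aux

variable {N : ℕ}

theorem hasDerivAt_matC {f : ℝ → MatC N} {f' : MatC N} {x : ℝ} :
    HasDerivAt f f' x ↔ ∀ i j, HasDerivAt (fun y => f y i j) (f' i j) x := by
  exact (hasDerivAt_pi (φ := fun y => (f y : Fin N → Fin N → ℂ))).trans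
    (forall_congr' fun i => hasDerivAt_pi)

theorem HasDerivAt.matMul {f g : ℝ → MatC N} {f' g' : MatC N} {x : ℝ}
    (hf : HasDerivAt f f' x) (hg : HasDerivAt g g' x) :
    HasDerivAt (fun y => f y * g y) (f' * g x + f x * g') x := by
  rw [hasDerivAt_matC] at *
  intro i j
  simp only [Matrix.mul_apply, Matrix.add_apply]
  exact HasDerivAt.congr_deriv (HasDerivAt.fun_sum fun k _ => (hf i k).mul (hg k j))
    (by rw [← Finset.sum_add_distrib])

/-- finite exponential-type sum -/
def ES (N : ℕ) (M : MatC N) (x : ℝ) : MatC N :=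
  ∑ n ∈ Finset.range N, ((x : ℂ) ^ n * ((n.factorial : ℂ))⁻¹) • M ^ n

theorem matPow_eq_zero_of_le {M : MatC N} (hM : M ^ N = 0) {n : ℕ} (hn : N ≤ n) : M ^ n = 0 := by
  obtain ⟨k, rfl⟩ := Nat.exists_eq_add_of_le hn
  rw [pow_add, hM, zero_mul]

theorem exp_eq_ES (M : MatC N) (hM : M ^ N = 0) (x : ℝ) :
    NormedSpace.exp ((x : ℂ) • M) = ES N M x := by
  rw [NormedSpace.exp_eq_tsum ℂ]
  show ∑' (n : ℕ), (n.factorial : ℂ)⁻¹ • ((x:ℂ) • M) ^ n = _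
  rw [tsum_eq_sum (s := Finset.range N) (fun n hn => by
    rw [_root_.smul_pow, matPow_eq_zero_of_le hM (by simpa using hn), smul_zero, smul_zero])]
  refine Finset.sum_congr rfl fun n _ => ?_
  rw [_root_.smul_pow, smul_smul, mul_comm]

theorem shift_sum (M : MatC N) (hM : M ^ N = 0) (z : ℂ) :
    ∑ n ∈ Finset.range N, ((n : ℂ) * (z ^ n * ((n.factorial : ℂ))⁻¹)) • M ^ n
      = z • (M * ∑ n ∈ Finset.range N, (z ^ n * ((n.factorial : ℂ))⁻¹) • M ^ n) := by
  cases N with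
  | zero => simp
  | succ m =>
    rw [Finset.sum_range_succ' (fun n => ((n : ℂ) * (z ^ n * ((n.factorial : ℂ))⁻¹)) • M ^ n) m,
      Finset.mul_sum]
    simp only [mul_smul_comm, ← pow_succ']
    rw [Finset.smul_sum, Finset.sum_range_succ, matPow_eq_zero_of_le hM (le_refl (m+1)),
      smul_zero, smul_zero, add_zero]
    simp only [Nat.cast_zero, zero_mul, zero_smul, add_zero]
    refine Finset.sum_congr rfl fun n _ => ?_
    rw [smul_smul]
    congr 1
    have h1 : (((n+1).factorial : ℂ)) = ((n:ℂ)+1) * (n.factorial : ℂ) := by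
      rw [Nat.factorial_succ]; push_cast; ring
    have h2 : ((n:ℂ)+1) ≠ 0 := Nat.cast_add_one_ne_zero n
    have h3 : ((n.factorial : ℂ)) ≠ 0 := Nat.cast_ne_zero.mpr n.factorial_ne_zero
    push_cast
    rw [h1]
    field_simp
    ring

theorem powJ_comm {M J : MatC N} (hMJ : M * J = J * M + M) (n : ℕ) :
    M ^ n * J = J * M ^ n + (n : ℂ) • M ^ n := by
  induction n with
  | zero => simp
  | succ n ih =>
    rw [pow_succ, mul_assoc, hMJ, mul_add, ← mul_assoc, ih, add_mul, smul_mul_assoc,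
      ← pow_succ, mul_assoc J (M ^ n) M, ← pow_succ]
    push_cast
    module

theorem ES_mul_J {M J : MatC N} (hMJ : M * J = J * M + M) (hM : M ^ N = 0) (x : ℝ) :
    ES N M x * J = J * ES N M x + (x : ℂ) • (M * ES N M x) := by
  rw [ES, Finset.sum_mul, Finset.mul_sum]
  rw [Finset.sum_congr rfl (fun n _ => by
    rw [smul_mul_assoc, powJ_comm hMJ n, smul_add]; module :
    ∀ n ∈ Finset.range N, _ = ((x:ℂ) ^ n * ((n.factorial : ℂ))⁻¹) • (J * M ^ n)
      + ((n:ℂ)) • (((x:ℂ) ^ n) • (((n.factorial : ℂ))⁻¹ • M ^ n)))]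
  rw [Finset.sum_add_distrib]
  congr 1
  · refine Finset.sum_congr rfl fun n _ => ?_
    rw [mul_smul_comm]
  · rw [← shift_sum M hM (x:ℂ)]
    refine Finset.sum_congr rfl fun n _ => ?_
    rw [smul_smul, smul_smul, mul_assoc]

theorem ES_mul_comm (M : MatC N) (x : ℝ) : M * ES N M x = ES N M x * M := by
  rw [ES, Finset.mul_sum, Finset.sum_mul]
  refine Finset.sum_congr rfl fun n _ => ?_
  rw [mul_smul_comm, smul_mul_assoc, ← pow_succ, ← pow_succ']

theorem hasDerivAt_ES (M : MatC N) (hM : M ^ N = 0) {x : ℝ} (hx : x ≠ 0) :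
    HasDerivAt (ES N M) (M * ES N M x) x := by
  have h : HasDerivAt (ES N M)
      (∑ n ∈ Finset.range N, (((n:ℂ) * (x:ℂ) ^ (n-1)) * ((n.factorial : ℂ))⁻¹) • M ^ n) x := by
    refine HasDerivAt.fun_sum fun n _ => ?_
    exact (((hasDerivAt_pow n (x:ℂ)).comp_ofReal).mul_const _).smul_const (M ^ n)
  have hxc : (x : ℂ) ≠ 0 := by exact_mod_cast hx
  have key : (x:ℂ) • (∑ n ∈ Finset.range N,
        (((n:ℂ) * (x:ℂ) ^ (n-1)) * ((n.factorial : ℂ))⁻¹) • M ^ n)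
      = (x:ℂ) • (M * ES N M x) := by
    rw [ES, Finset.smul_sum, ← shift_sum M hM (x:ℂ)]
    refine Finset.sum_congr rfl fun n _ => ?_
    rw [smul_smul]
    congr 1
    cases n with
    | zero => simp
    | succ n => rw [Nat.add_sub_cancel]; push_cast; ring
  rwa [smul_right_injective (MatC N) hxc key] at h

theorem Amat_pow_apply (a : ℕ → ℝ) (m : ℕ) : ∀ i j : Fin N, (i : ℕ) < (j : ℕ) + m →
    (Amat N a ^ m) i j = 0 := by
  induction m with
  | zero => intro i j h; simp only [pow_zero, Matrix.one_apply]
            rw [if_neg]; intro h'; subst h'; omega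
  | succ m ih =>
    intro i j h
    rw [pow_succ, Matrix.mul_apply]
    refine Finset.sum_eq_zero fun k _ => ?_
    rcases eq_or_ne (k : ℕ) ((j : ℕ) + 1) with hk | hk
    · rw [ih i k (by omega), zero_mul]
    · rw [show Amat N a k j = 0 from if_neg hk, mul_zero]

theorem Amat_pow_N (a : ℕ → ℝ) : Amat N a ^ N = 0 := by
  ext i j
  rw [Amat_pow_apply a N i j (by omega)]
  rfl

theorem AmatH_pow_N (a : ℕ → ℝ) : (Amat N a)ᴴ ^ N = 0 := by
  rw [← Matrix.conjTranspose_pow, Amat_pow_N, Matrix.conjTranspose_zero]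

theorem AmatH_mul_J (a : ℕ → ℝ) :
    (Amat N a)ᴴ * Jmat N = Jmat N * (Amat N a)ᴴ + (Amat N a)ᴴ := by
  ext i j
  simp only [Matrix.mul_apply, Matrix.add_apply, Jmat, Matrix.conjTranspose_apply,
    Matrix.diagonal_apply, Amat, Matrix.of_apply]
  rw [Finset.sum_eq_single j, Finset.sum_eq_single i]
  · simp only [eq_self_iff_true, if_true]
    rcases eq_or_ne (j : ℕ) ((i : ℕ) + 1) with h | h
    · rw [if_pos h]
      have hc : ((j : ℕ) : ℂ) = ((i : ℕ) : ℂ) + 1 := by exact_mod_cast congrArg Nat.cast h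
      rw [hc]; ring
    · rw [if_neg h]; simp
  · intro b _ hb; rw [if_neg (Ne.symm hb), zero_mul]
  · simp
  · intro b _ hb; rw [if_neg hb, mul_zero]
  · simp

/-- conjugate-transpose of a matrix polynomial -/
def cT {N : ℕ} (M : MatPoly N) : MatPoly N :=
  Matrix.of fun i j => (M j i).map (starRingEnd ℂ)

theorem eval_map_conj (p : Polynomial ℂ) (z : ℂ) :
    (p.map (starRingEnd ℂ)).eval z = star (p.eval (star z)) := by
  induction p using Polynomial.induction_on' with
  | add p q hp hq => simp [hp, hq]
  | monomial n c => simp [Polynomial.eval_monomial, mul_comm]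

theorem pEval_cT (M : MatPoly N) (x : ℝ) : pEval (cT M) x = (pEval M x)ᴴ := by
  ext i j
  simp only [pEval, cT, Matrix.map_apply, Matrix.of_apply, Matrix.conjTranspose_apply]
  rw [eval_map_conj]
  congr 1
  rw [Complex.star_def, Complex.conj_ofReal]

theorem cT_pDeriv (M : MatPoly N) : pDeriv (cT M) = cT (pDeriv M) := by
  ext i j
  simp only [pDeriv, cT, Matrix.map_apply, Matrix.of_apply]
  rw [Polynomial.derivative_map]

theorem hasDerivAt_pEval (R : MatPoly N) (x : ℝ) :
    HasDerivAt (fun y => pEval R y) (pEval (pDeriv R) x) x := by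
  refine hasDerivAt_matC.mpr fun i j => ?_
  simpa [pEval, pDeriv] using (Polynomial.hasDerivAt (R i j) ((x:ℝ):ℂ)).comp_ofReal

/-- the boundary combination lemma -/
theorem bdry_comb {l : Filter ℝ} (W : ℝ → MatC N) (P R : MatPoly N)
    (h : ∀ R' : MatPoly N, Tendsto (fun x : ℝ => (x:ℂ) • (W x * pEval R' x)) l (nhds 0)) :
    Tendsto (fun x : ℝ => (x:ℂ) • (pEval P x * W x * pEval R x)) l (nhds 0) := by
  have hpi : ∀ (g : ℝ → MatC N), (∀ i j, Tendsto (fun x => g x i j) l (nhds 0)) →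
      Tendsto g l (nhds 0) := by
    intro g hg
    have : Tendsto (fun x => (g x : Fin N → Fin N → ℂ)) l (nhds 0) := by
      refine tendsto_pi_nhds.mpr fun i => tendsto_pi_nhds.mpr fun j => ?_
      exact hg i j
    exact this
  refine hpi _ fun i j => ?_
  have hxe : ∀ x : ℝ, ((x:ℂ) • (pEval P x * W x * pEval R x)) i j
      = ∑ k, ((x:ℂ) • (W x * pEval (Matrix.of fun r s => P i k * R r s) x)) k j := by
    intro x
    simp only [Matrix.smul_apply, mul_assoc, Matrix.mul_apply, smul_eq_mul, Finset.mul_sum,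
      pEval, Matrix.map_apply, Matrix.of_apply, Polynomial.eval_mul]
    refine Finset.sum_congr rfl fun k _ => Finset.sum_congr rfl fun s _ => by ring
  have hk : ∀ k : Fin N, Tendsto
      (fun x : ℝ => ((x:ℂ) • (W x * pEval (Matrix.of fun r s => P i k * R r s) x)) k j)
      l (nhds 0) := by
    intro k
    have hc : Continuous fun M : MatC N => M k j :=
      (continuous_apply j).comp (continuous_apply k)
    have := (hc.tendsto 0).comp (h (Matrix.of fun r s => P i k * R r s))
    exact this
  have := tendsto_finset_sum Finset.univ (fun k _ => hk k)
  refine Tendsto.congr' (Filter.Eventually.of_forall fun x => (hxe x).symm) ?_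
  simpa using this

end Aux

section Aux2

variable {N : ℕ}

/-- derivative of `Tmat` -/
def Tder (N : ℕ) (ν : ℝ) (δ : ℕ → ℝ) (φ : ℝ → ℝ) (x : ℝ) : MatC N :=
  Matrix.diagonal fun k =>
    ((Real.exp (-(φ x)) * δ ((k : ℕ) + 1) *
      ((ν + ((k : ℕ) : ℝ) + 1) * x ^ (ν + ((k : ℕ) : ℝ)) -
        deriv φ x * x ^ (ν + ((k : ℕ) : ℝ) + 1)) : ℝ) : ℂ)

theorem hasDerivAt_Tmat {ν : ℝ} {δ : ℕ → ℝ} {φ : ℝ → ℝ} {x : ℝ} (hx : 0 < x)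
    (hφd : HasDerivAt φ (deriv φ x) x) :
    HasDerivAt (Tmat N ν δ φ) (Tder N ν δ φ x) x := by
  refine hasDerivAt_matC.mpr fun i j => ?_
  rcases eq_or_ne i j with rfl | hij
  · simp only [Tmat, Tder, Matrix.diagonal_apply_eq]
    have hexp : HasDerivAt (fun y : ℝ => Real.exp (-(φ y)))
        (Real.exp (-(φ x)) * -(deriv φ x)) x := by
      simpa [mul_comm] using (hφd.neg).exp
    have hpow : HasDerivAt (fun y : ℝ => y ^ (ν + ((i : ℕ) : ℝ) + 1))
        ((ν + ((i : ℕ) : ℝ) + 1) * x ^ (ν + ((i : ℕ) : ℝ) + 1 - 1)) x :=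
      Real.hasDerivAt_rpow_const (Or.inl hx.ne')
    have hmul := (hexp.mul_const (δ ((i : ℕ) + 1))).mul hpow
    have heq : Real.exp (-(φ x)) * -(deriv φ x) * δ ((i : ℕ) + 1) * x ^ (ν + ((i : ℕ) : ℝ) + 1)
        + Real.exp (-(φ x)) * δ ((i : ℕ) + 1) * ((ν + ((i : ℕ) : ℝ) + 1)
          * x ^ (ν + ((i : ℕ) : ℝ) + 1 - 1))
        = Real.exp (-(φ x)) * δ ((i : ℕ) + 1) *
          ((ν + ((i : ℕ) : ℝ) + 1) * x ^ (ν + ((i : ℕ) : ℝ)) -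
            deriv φ x * x ^ (ν + ((i : ℕ) : ℝ) + 1)) := by
      rw [show ν + ((i : ℕ) : ℝ) + 1 - 1 = ν + ((i : ℕ) : ℝ) by ring]
      ring
    exact (heq ▸ hmul).ofReal_comp
  · have h0 : (fun y : ℝ => Tmat N ν δ φ y i j) = fun _ => (0 : ℂ) :=
      funext fun y => Matrix.diagonal_apply_ne _ hij
    rw [show Tder N ν δ φ x i j = 0 from Matrix.diagonal_apply_ne _ hij, h0]
    exact hasDerivAt_const x 0

theorem Tder_key {ν : ℝ} {δ : ℕ → ℝ} {φ : ℝ → ℝ} {x : ℝ} (hx : 0 < x) :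
    (x : ℂ) • Tder N ν δ φ x
      = ((ν : ℝ) : ℂ) • Tmat N ν δ φ x + Tmat N ν δ φ x * Jmat N
        - ((x * deriv φ x : ℝ) : ℂ) • Tmat N ν δ φ x := by
  rw [Tmat, Tder, Jmat, Matrix.diagonal_mul_diagonal]
  ext i j
  rcases eq_or_ne i j with rfl | hij
  · simp only [Matrix.smul_apply, Matrix.add_apply, Matrix.sub_apply,
      Matrix.diagonal_apply_eq, smul_eq_mul]
    rw [show (x:ℝ) ^ (ν + ((i : ℕ) : ℝ) + 1) = x ^ (ν + ((i : ℕ) : ℝ)) * x from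
      Real.rpow_add_one hx.ne' _]
    push_cast
    ring
  · simp [Matrix.diagonal_apply_ne _ hij]

theorem Jmat_conjT : (Jmat N)ᴴ = Jmat N := by
  ext i j
  rcases eq_or_ne i j with rfl | h
  · simp [Jmat, Complex.star_def]
  · simp [Jmat, Matrix.conjTranspose_apply, Matrix.diagonal_apply_ne _ h,
      Matrix.diagonal_apply_ne _ (Ne.symm h)]

theorem conjT_S (ν x d : ℝ) (Q : MatPoly N) :
    (-((x : ℂ) • pEval (pDeriv Q) x) - pEval Q x * (((1 + ν : ℝ) : ℂ) • 1 + Jmat N) +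
        ((d : ℝ) : ℂ) • pEval Q x)ᴴ
      = -((x : ℂ) • pEval (pDeriv (cT Q)) x)
        - (((1 + ν : ℝ) : ℂ) • 1 + Jmat N) * pEval (cT Q) x
        + ((d : ℝ) : ℂ) • pEval (cT Q) x := by
  simp only [Matrix.conjTranspose_add, Matrix.conjTranspose_sub, Matrix.conjTranspose_neg,
    Matrix.conjTranspose_smul, Matrix.conjTranspose_mul, Matrix.conjTranspose_one,
    Jmat_conjT, ← pEval_cT, ← cT_pDeriv, Complex.star_def, Complex.conj_ofReal]

end Aux2


set_option maxHeartbeats 2000000 in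
theorem mutually_adjoint_D_Ddagger
    (N : ℕ) (hN : 2 ≤ N) (a : ℕ → ℝ) (ν : ℝ) (hν : 0 < ν)
    (δ : ℕ → ℝ) (hδ : ∀ k, 1 ≤ k → k ≤ N → 0 < δ k)
    (φ : ℝ → ℝ) (hφ : ∀ x ∈ Set.Ici (0 : ℝ), AnalyticAt ℝ φ x)
    -- boundary condition: `x W(x) R(x) → 0` at both endpoints, for every matrix polynomial `R`
    (hbdry0 : ∀ R : MatPoly N,
      Tendsto (fun x : ℝ => (x : ℂ) • (Wmat N a ν δ φ x * pEval R x))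
        (nhdsWithin 0 (Set.Ioi 0)) (nhds 0))
    (hbdryInf : ∀ R : MatPoly N,
      Tendsto (fun x : ℝ => (x : ℂ) • (Wmat N a ν δ φ x * pEval R x)) atTop (nhds 0))
    (P Q : MatPoly N)
    -- absolute convergence of the two displayed integrals
    (hint₁ : IntegrableOn
      (fun x : ℝ => ((x : ℂ) • pEval (pDeriv P) x + (x : ℂ) • (pEval P x * (Amat N a - 1))) *
        Wmat N a ν δ φ x * (pEval Q x)ᴴ) (Set.Ioi 0))
    (hint₂ : IntegrableOn
      (fun x : ℝ => pEval P x * Wmat N a ν δ φ x *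
        (-((x : ℂ) • pEval (pDeriv Q) x) - pEval Q x * (((1 + ν : ℝ) : ℂ) • 1 + Jmat N) +
          ((x * deriv φ x - x : ℝ) : ℂ) • pEval Q x)ᴴ) (Set.Ioi 0)) :
    (∫ x in Set.Ioi (0 : ℝ),
        ((x : ℂ) • pEval (pDeriv P) x + (x : ℂ) • (pEval P x * (Amat N a - 1))) *
          Wmat N a ν δ φ x * (pEval Q x)ᴴ) =
      ∫ x in Set.Ioi (0 : ℝ),
        pEval P x * Wmat N a ν δ φ x *
          (-((x : ℂ) • pEval (pDeriv Q) x) - pEval Q x * (((1 + ν : ℝ) : ℂ) • 1 + Jmat N) +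
            ((x * deriv φ x - x : ℝ) : ℂ) • pEval Q x)ᴴ := by
  classical
  haveI : CompleteSpace (MatC N) := FiniteDimensional.complete ℂ _
  have hA : Amat N a ^ N = 0 := Amat_pow_N a
  have hB : (Amat N a)ᴴ ^ N = 0 := AmatH_pow_N a
  -- the potential function
  set F : ℝ → MatC N :=
    fun y : ℝ => (y : ℂ) • (pEval P y * Wmat N a ν δ φ y * pEval (cT Q) y) with hFdef
  have hF0 : F 0 = 0 := by simp [hFdef]
  -- derivative away from 0
  have hderiv : ∀ x ∈ Set.Ioi (0 : ℝ), HasDerivAt F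
      ((((x : ℂ) • pEval (pDeriv P) x + (x : ℂ) • (pEval P x * (Amat N a - 1))) *
          Wmat N a ν δ φ x * (pEval Q x)ᴴ) -
        (pEval P x * Wmat N a ν δ φ x *
          (-((x : ℂ) • pEval (pDeriv Q) x) - pEval Q x * (((1 + ν : ℝ) : ℂ) • 1 + Jmat N) +
            ((x * deriv φ x - x : ℝ) : ℂ) • pEval Q x)ᴴ)) x := by
    intro x hx
    rw [Set.mem_Ioi] at hx
    have hφd : HasDerivAt φ (deriv φ x) x :=
      ((hφ x (le_of_lt hx)).differentiableAt).hasDerivAt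
    have hE := hasDerivAt_ES (Amat N a) hA (ne_of_gt hx)
    have hU := hasDerivAt_ES ((Amat N a)ᴴ) hB (ne_of_gt hx)
    have hT := hasDerivAt_Tmat (N := N) (ν := ν) (δ := δ) (φ := φ) hx hφd
    have hPd := hasDerivAt_pEval P x
    have hQd := hasDerivAt_pEval (cT Q) x
    have hid : HasDerivAt (fun y : ℝ => (y : ℂ)) 1 x := by
      simpa using (hasDerivAt_id x).ofReal_comp
    have hraw := hid.smul ((hPd.matMul ((hE.matMul hT).matMul hU)).matMul hQd)
    have hfun : F = (fun y : ℝ => (y : ℂ) •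
        (pEval P y * (ES N (Amat N a) y * Tmat N ν δ φ y * ES N ((Amat N a)ᴴ) y) *
          pEval (cT Q) y)) := by
      funext y
      rw [hFdef]
      simp only [Wmat, exp_eq_ES _ hA, exp_eq_ES _ hB]
    rw [hfun]
    have hWx : Wmat N a ν δ φ x
        = ES N (Amat N a) x * Tmat N ν δ φ x * ES N ((Amat N a)ᴴ) x := by
      rw [Wmat, exp_eq_ES _ hA, exp_eq_ES _ hB]
    have hQc : (pEval Q x)ᴴ = pEval (cT Q) x := (pEval_cT Q x).symm
    rw [hWx, hQc, conjT_S ν x (x * deriv φ x - x) Q]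
    refine hraw.congr_deriv ?_
    -- now a pure (matrix-)algebra identity
    set E := ES N (Amat N a) x with hEdef
    set U := ES N ((Amat N a)ᴴ) x with hUdef
    set T := Tmat N ν δ φ x with hTdef
    set Td := Tder N ν δ φ x with hTddef
    set A' := Amat N a with hA'def
    set B' := (Amat N a)ᴴ with hB'def
    set Px := pEval P x with hPxdef
    set Pd := pEval (pDeriv P) x with hPddef
    set Qb := pEval (cT Q) x with hQbdef
    set Qd := pEval (pDeriv (cT Q)) x with hQddef
    have hcomm : B' * U = U * B' := ES_mul_comm _ x
    have hUJ : U * Jmat N = Jmat N * U + (x : ℂ) • (B' * U) :=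
      ES_mul_J (AmatH_mul_J a) hB x
    have hTd : (x : ℂ) • Td
        = ((ν : ℝ) : ℂ) • T + T * Jmat N - ((x * deriv φ x : ℝ) : ℂ) • T := Tder_key hx
    -- Pearson equation
    have hPearson : (x : ℂ) • ((A' * E * T + E * Td) * U + E * T * (B' * U))
        = (x : ℂ) • (A' * (E * (T * U)))
          + (((ν : ℝ) : ℂ) • (E * (T * U)) + E * (T * (U * Jmat N)))
          - ((x * deriv φ x : ℝ) : ℂ) • (E * (T * U)) := by
      have hd : (x : ℂ) • ((A' * E * T + E * Td) * U + E * T * (B' * U))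
          - ((x : ℂ) • (A' * (E * (T * U)))
            + (((ν : ℝ) : ℂ) • (E * (T * U)) + E * (T * (U * Jmat N)))
            - ((x * deriv φ x : ℝ) : ℂ) • (E * (T * U)))
          = E * ((((x : ℂ) • Td
                - (((ν : ℝ) : ℂ) • T + T * Jmat N - ((x * deriv φ x : ℝ) : ℂ) • T))) * U)
            - E * (T * ((U * Jmat N) - (Jmat N * U + (x : ℂ) • (B' * U)))) := by
        rw [hcomm]
        simp only [mul_add, add_mul, mul_sub, sub_mul, smul_add, smul_sub, smul_mul_assoc,
          mul_smul_comm, smul_smul, mul_assoc, mul_one, one_mul, one_smul, neg_mul, mul_neg,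
          smul_neg, neg_smul]
        module
      have hz1 : (x : ℂ) • Td
          - (((ν : ℝ) : ℂ) • T + T * Jmat N - ((x * deriv φ x : ℝ) : ℂ) • T) = 0 :=
        sub_eq_zero.mpr hTd
      have hz2 : (U * Jmat N) - (Jmat N * U + (x : ℂ) • (B' * U)) = 0 :=
        sub_eq_zero.mpr hUJ
      rw [hz1, hz2] at hd
      simp only [Matrix.mul_zero, Matrix.zero_mul, mul_zero, zero_mul, sub_zero,
        zero_sub, neg_zero, sub_self] at hd
      exact sub_eq_zero.mp hd
    -- final assembly
    have hd2 : ((x : ℂ) • Pd + (x : ℂ) • (Px * (A' - 1))) * (E * T * U) * Qb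
          - Px * (E * T * U) *
            (-((x : ℂ) • Qd) - (((1 + ν : ℝ) : ℂ) • 1 + Jmat N) * Qb
              + ((x * deriv φ x - x : ℝ) : ℂ) • Qb)
          - ((x : ℂ) • (((Pd * (E * T * U)) + Px * ((A' * E * T + E * Td) * U + E * T * (B' * U))) * Qb
              + Px * (E * T * U) * Qd)
            + (1 : ℂ) • (Px * (E * T * U) * Qb))
        = Px * ((((x : ℂ) • (A' * (E * (T * U)))
              + (((ν : ℝ) : ℂ) • (E * (T * U)) + E * (T * (U * Jmat N)))
              - ((x * deriv φ x : ℝ) : ℂ) • (E * (T * U)))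
            - (x : ℂ) • ((A' * E * T + E * Td) * U + E * T * (B' * U))) * Qb) := by
      simp only [mul_add, add_mul, mul_sub, sub_mul, smul_add, smul_sub, smul_mul_assoc,
        mul_smul_comm, smul_smul, mul_assoc, mul_one, one_mul, one_smul, neg_mul, mul_neg,
        smul_neg, neg_smul, Complex.ofReal_sub, Complex.ofReal_mul, Complex.ofReal_add,
        Complex.ofReal_one]
      module
    rw [hPearson] at hd2
    simp only [sub_self, Matrix.zero_mul, Matrix.mul_zero, zero_mul, mul_zero] at hd2
    exact (sub_eq_zero.mp hd2).symm
  -- boundary behaviour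
  have htop : Tendsto F atTop (nhds 0) := bdry_comb (Wmat N a ν δ φ) P (cT Q) hbdryInf
  have h0 : Tendsto F (nhdsWithin 0 (Set.Ioi 0)) (nhds 0) :=
    bdry_comb (Wmat N a ν δ φ) P (cT Q) hbdry0
  have hcont0 : ContinuousWithinAt F (Set.Ici (0 : ℝ)) 0 := by
    show Tendsto F (nhdsWithin 0 (Set.Ici 0)) (nhds (F 0))
    rw [hF0, ← Set.Ioi_insert, nhdsWithin_insert]
    exact Tendsto.sup (hF0 ▸ tendsto_pure_nhds F 0) h0
  have hsub : IntegrableOn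
      (fun x : ℝ => (((x : ℂ) • pEval (pDeriv P) x + (x : ℂ) • (pEval P x * (Amat N a - 1))) *
          Wmat N a ν δ φ x * (pEval Q x)ᴴ) -
        (pEval P x * Wmat N a ν δ φ x *
          (-((x : ℂ) • pEval (pDeriv Q) x) - pEval Q x * (((1 + ν : ℝ) : ℂ) • 1 + Jmat N) +
            ((x * deriv φ x - x : ℝ) : ℂ) • pEval Q x)ᴴ)) (Set.Ioi 0) := hint₁.sub hint₂
  have hFTC := integral_Ioi_of_hasDerivAt_of_tendsto hcont0 hderiv hsub htop
  rw [hF0, sub_zero, integral_sub hint₁ hint₂] at hFTC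
  exact sub_eq_zero.mp hFTC
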